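/- Let φ = C₁ ∧ ⋯ ∧ C_m be a 3-CNF formula over variables X with C_i = (ℓ_{i1} ∨ ℓ_{i2} ∨ ℓ_{i3}), let F=(A,R) be the AF with A = {ℓ_{ij} | 1 ≤ i ≤ m, 1 ≤ j ≤ 3} and R consisting of the symmetric attacks {ℓ_{i1},ℓ_{i2}}, {ℓ_{i2},ℓ_{i3}}, {ℓ_{i3},ℓ_{i1}} for each i ≤ m together with the symmetric attacks {ℓ,ℓ'} between every pair of occurrences of complementary literals, and let F'=(A',R') be the shadow AF of F. Then for each σ ∈ {conflict-free, naive}: φ is satisfiable if and only if F' admits two σ-extensions S,T with d(S,T) = 2m. -/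

import Mathlib

open scoped symmDiff

/-- A set of arguments is conflict-free w.r.t. the attack relation `R`. -/
def ConflictFree {α : Type*} (R : α → α → Prop) (S : Finset α) : Prop :=
  ∀ x ∈ S, ∀ y ∈ S, ¬ R x y

/-- A set is naive (w.r.t. an AF whose set of arguments is the whole type) if it is
conflict-free and no proper superset of it is conflict-free. -/
def Naive {α : Type*} (R : α → α → Prop) (S : Finset α) : Prop :=
  ConflictFree R S ∧ ∀ S' : Finset α, S ⊂ S' → ¬ ConflictFree R S'

/-- Arguments of the reduction AF for a 3-CNF with `m` clauses: one argument per
literal occurrence `(i,j)` (the `j`-th literal of clause `i`). -/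
abbrev LArg (m : ℕ) : Type := Fin m × Fin 3

/-- The (symmetric) attack relation of the reduction AF for a 3-CNF with `m` clauses,
whose `j`-th literal of clause `i` is `ℓ i j` (a variable together with a polarity):
a triangle of attacks between the three literal occurrences of each clause, together
with attacks between every pair of occurrences of complementary literals. -/
def litAttack {X : Type*} [DecidableEq X] {m : ℕ} (ℓ : Fin m → Fin 3 → X × Bool)
    (p q : LArg m) : Prop :=
  (p.1 = q.1 ∧ p.2 ≠ q.2) ∨
  ((ℓ p.1 p.2).1 = (ℓ q.1 q.2).1 ∧ (ℓ p.1 p.2).2 ≠ (ℓ q.1 q.2).2)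

/-- The attack relation of the shadow AF of `(A, R)`: original arguments are
`Sum.inl s`, shadow arguments `s_*` are `Sum.inr s`.  The original attacks are kept,
every argument attacks (and is attacked by) its own shadow, and whenever `(s,t) ∈ R`
we additionally have the attacks between `s` and `t_*`, between `s_*` and `t_*`,
and between `s_*` and `t`. -/
def shadowAttack {α : Type*} (R : α → α → Prop) : (α ⊕ α) → (α ⊕ α) → Prop
  | Sum.inl s, Sum.inl t => R s t
  | Sum.inl s, Sum.inr t => s = t ∨ R s t
  | Sum.inr s, Sum.inl t => s = t ∨ R s t
  | Sum.inr s, Sum.inr t => R s t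

section Helpers

variable {X : Type*} [DecidableEq X] {m : ℕ} (ℓ : Fin m → Fin 3 → X × Bool)

def und {m : ℕ} : (LArg m ⊕ LArg m) → LArg m := Sum.elim id id

lemma lit_to_shadow {a b : LArg m ⊕ LArg m}
    (h : litAttack ℓ (und a) (und b)) : shadowAttack (litAttack ℓ) a b := by
  cases a <;> cases b <;> simp only [und, Sum.elim_inl, Sum.elim_inr, id] at h <;>
    simp only [shadowAttack] <;> tauto

lemma clash {a b : LArg m ⊕ LArg m} (hne : a ≠ b)
    (h1 : (und a).1 = (und b).1) : shadowAttack (litAttack ℓ) a b := by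
  by_cases h : und a = und b
  · cases a with
    | inl p =>
      cases b with
      | inl q => exact absurd (congrArg Sum.inl (h : p = q)) hne
      | inr q => exact Or.inl (h : p = q)
    | inr p =>
      cases b with
      | inl q => exact Or.inl (h : p = q)
      | inr q => exact absurd (congrArg Sum.inr (h : p = q)) hne
  · exact lit_to_shadow ℓ (Or.inl ⟨h1, fun h2 => h (Prod.ext h1 h2)⟩)

lemma cf_card_le {S : Finset (LArg m ⊕ LArg m)}
    (hS : ConflictFree (shadowAttack (litAttack ℓ)) S) : S.card ≤ m := by
  have : S.card ≤ (Finset.univ : Finset (Fin m)).card := by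
    apply Finset.card_le_card_of_injOn (fun a => (und a).1)
      (fun _ _ => Finset.mem_univ _)
    intro a ha b hb hab
    by_contra hne
    exact hS a ha b hb (clash ℓ hne hab)
  simpa using this

lemma cf_to_sat {S T : Finset (LArg m ⊕ LArg m)}
    (hS : ConflictFree (shadowAttack (litAttack ℓ)) S)
    (hT : ConflictFree (shadowAttack (litAttack ℓ)) T)
    (hd : (S ∆ T).card = 2 * m) :
    ∃ τ : X → Bool, ∀ i : Fin m, ∃ j : Fin 3, τ (ℓ i j).1 = (ℓ i j).2 := by
  classical
  -- S has exactly m elements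
  have hcard : S.card = m := by
    have h1 : (S ∆ T).card ≤ S.card + T.card := by
      calc (S ∆ T).card ≤ (S ⊔ T).card := Finset.card_le_card symmDiff_le_sup
        _ = (S ∪ T).card := by rw [Finset.sup_eq_union]
        _ ≤ S.card + T.card := Finset.card_union_le S T
    have := cf_card_le ℓ hS
    have := cf_card_le ℓ hT
    omega
  -- injectivity of clause indices on S
  have hinj : Set.InjOn (fun a => (und a).1) (S : Set (LArg m ⊕ LArg m)) := by
    intro a ha b hb hab
    by_contra hne
    exact hS a ha b hb (clash ℓ hne hab)
  -- surjectivity onto clauses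
  have hsurj : ∀ i : Fin m, ∃ a ∈ S, (und a).1 = i := by
    intro i
    have himg : (S.image fun a => (und a).1) = Finset.univ := by
      apply Finset.eq_univ_of_card
      rw [Finset.card_image_of_injOn hinj, hcard, Fintype.card_fin]
    have : i ∈ S.image fun a => (und a).1 := himg ▸ Finset.mem_univ i
    simpa using this
  refine ⟨fun x => if ∃ a ∈ S, (ℓ (und a).1 (und a).2).1 = x ∧
      (ℓ (und a).1 (und a).2).2 = true then true else false, ?_⟩
  intro i
  obtain ⟨a, haS, hai⟩ := hsurj i
  refine ⟨(und a).2, ?_⟩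
  rw [← hai]
  beta_reduce
  cases hb : (ℓ (und a).1 (und a).2).2 with
  | true =>
    rw [if_pos ⟨a, haS, rfl, hb⟩]
  | false =>
    rw [if_neg]
    rintro ⟨b, hbS, h1, h2⟩
    exact hS a haS b hbS (lit_to_shadow ℓ (Or.inr ⟨h1.symm, by rw [hb, h2]; simp⟩))

lemma sat_to_naive (τ : X → Bool) (hτ : ∀ i : Fin m, ∃ j : Fin 3, τ (ℓ i j).1 = (ℓ i j).2) :
    ∃ S T : Finset (LArg m ⊕ LArg m),
      Naive (shadowAttack (litAttack ℓ)) S ∧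
      Naive (shadowAttack (litAttack ℓ)) T ∧ (S ∆ T).card = 2 * m := by
  classical
  choose j hj using hτ
  set S : Finset (LArg m ⊕ LArg m) :=
    Finset.univ.image (fun i : Fin m => Sum.inl (i, j i)) with hSdef
  set T : Finset (LArg m ⊕ LArg m) :=
    Finset.univ.image (fun i : Fin m => Sum.inr (i, j i)) with hTdef
  have hmemS : ∀ i : Fin m, (Sum.inl (i, j i) : LArg m ⊕ LArg m) ∈ S := by
    intro i; simp [hSdef]
  have hmemT : ∀ i : Fin m, (Sum.inr (i, j i) : LArg m ⊕ LArg m) ∈ T := by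
    intro i; simp [hTdef]
  -- no attacks among chosen literals
  have key : ∀ i i' : Fin m, ¬ litAttack ℓ (i, j i) (i', j i') := by
    rintro i i' (⟨h1, h2⟩ | ⟨h1, h2⟩)
    · simp only at h1; subst h1; exact h2 rfl
    · apply h2
      rw [← hj i, ← hj i', h1]
  -- triangle attack against an outsider
  have tri : ∀ q : LArg m, q ≠ (q.1, j q.1) → litAttack ℓ q (q.1, j q.1) := by
    intro q hq
    exact Or.inl ⟨rfl, fun h2 => hq (Prod.ext rfl h2)⟩
  have hScf : ConflictFree (shadowAttack (litAttack ℓ)) S := by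
    intro x hx y hy
    simp only [hSdef, Finset.mem_image, Finset.mem_univ, true_and] at hx hy
    obtain ⟨i, rfl⟩ := hx; obtain ⟨i', rfl⟩ := hy
    exact key i i'
  have hTcf : ConflictFree (shadowAttack (litAttack ℓ)) T := by
    intro x hx y hy
    simp only [hTdef, Finset.mem_image, Finset.mem_univ, true_and] at hx hy
    obtain ⟨i, rfl⟩ := hx; obtain ⟨i', rfl⟩ := hy
    exact key i i'
  have hSnaive : Naive (shadowAttack (litAttack ℓ)) S := by
    refine ⟨hScf, ?_⟩
    intro S' hSS' hcf'
    obtain ⟨c, hcS', hcS⟩ := Finset.exists_of_ssubset hSS'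
    cases c with
    | inl q =>
      have hq : q ≠ (q.1, j q.1) := by
        intro h; apply hcS; rw [h]; exact hmemS q.1
      exact hcf' (Sum.inl q) hcS' (Sum.inl (q.1, j q.1)) (hSS'.1 (hmemS q.1))
        (tri q hq)
    | inr q =>
      by_cases hq : q = (q.1, j q.1)
      · exact hcf' (Sum.inr q) hcS' (Sum.inl (q.1, j q.1)) (hSS'.1 (hmemS q.1))
          (Or.inl hq)
      · exact hcf' (Sum.inr q) hcS' (Sum.inl (q.1, j q.1)) (hSS'.1 (hmemS q.1))
          (Or.inr (tri q hq))
  have hTnaive : Naive (shadowAttack (litAttack ℓ)) T := by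
    refine ⟨hTcf, ?_⟩
    intro T' hTT' hcf'
    obtain ⟨c, hcT', hcT⟩ := Finset.exists_of_ssubset hTT'
    cases c with
    | inr q =>
      have hq : q ≠ (q.1, j q.1) := by
        intro h; apply hcT; rw [h]; exact hmemT q.1
      exact hcf' (Sum.inr q) hcT' (Sum.inr (q.1, j q.1)) (hTT'.1 (hmemT q.1))
        (tri q hq)
    | inl q =>
      by_cases hq : q = (q.1, j q.1)
      · exact hcf' (Sum.inl q) hcT' (Sum.inr (q.1, j q.1)) (hTT'.1 (hmemT q.1))
          (Or.inl hq)
      · exact hcf' (Sum.inl q) hcT' (Sum.inr (q.1, j q.1)) (hTT'.1 (hmemT q.1))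
          (Or.inr (tri q hq))
  have hdisj : Disjoint S T := by
    rw [Finset.disjoint_left]
    intro a haS haT
    simp only [hSdef, Finset.mem_image] at haS
    simp only [hTdef, Finset.mem_image] at haT
    obtain ⟨i, _, rfl⟩ := haS
    obtain ⟨i', _, h⟩ := haT
    exact absurd h (by simp)
  have hcardS : S.card = m := by
    rw [hSdef, Finset.card_image_of_injective _ (fun a b h => by
      simpa [und] using congrArg (fun x => (und x).1) h)]
    simp
  have hcardT : T.card = m := by
    rw [hTdef, Finset.card_image_of_injective _ (fun a b h => by
      simpa [und] using congrArg (fun x => (und x).1) h)]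
    simp
  refine ⟨S, T, hSnaive, hTnaive, ?_⟩
  rw [hdisj.symmDiff_eq_sup]
  -- sup = union for finsets
  rw [Finset.sup_eq_union, Finset.card_union_of_disjoint hdisj, hcardS, hcardT]
  ring

end Helpers

/-- For the shadow AF `F'` of the reduction AF of a 3-CNF `φ = C₁ ∧ ⋯ ∧ C_m`, and for
each semantics `σ ∈ {conflict-free, naive}`:  `φ` is satisfiable iff `F'` admits two
`σ`-extensions `S, T` with `d(S,T) = 2m`. -/
theorem stmt17 {X : Type*} [DecidableEq X] (m : ℕ) (ℓ : Fin m → Fin 3 → X × Bool) :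
    ((∃ τ : X → Bool, ∀ i : Fin m, ∃ j : Fin 3, τ (ℓ i j).1 = (ℓ i j).2) ↔
      (∃ S T : Finset (LArg m ⊕ LArg m),
        ConflictFree (shadowAttack (litAttack ℓ)) S ∧
        ConflictFree (shadowAttack (litAttack ℓ)) T ∧ (S ∆ T).card = 2 * m)) ∧
    ((∃ τ : X → Bool, ∀ i : Fin m, ∃ j : Fin 3, τ (ℓ i j).1 = (ℓ i j).2) ↔
      (∃ S T : Finset (LArg m ⊕ LArg m),
        Naive (shadowAttack (litAttack ℓ)) S ∧
        Naive (shadowAttack (litAttack ℓ)) T ∧ (S ∆ T).card = 2 * m)) := by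
  constructor
  · constructor
    · rintro ⟨τ, hτ⟩
      obtain ⟨S, T, hS, hT, hd⟩ := sat_to_naive ℓ τ hτ
      exact ⟨S, T, hS.1, hT.1, hd⟩
    · rintro ⟨S, T, hS, hT, hd⟩
      exact cf_to_sat ℓ hS hT hd
  · constructor
    · rintro ⟨τ, hτ⟩
      exact sat_to_naive ℓ τ hτ
    · rintro ⟨S, T, hS, hT, hd⟩
      exact cf_to_sat ℓ hS.1 hT.1 hd
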